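/- Let K be a finite extension of Q_p with p odd, π a uniformiser, e the ramification index, and m ≥ 1. Let α_i, α_j, β_i, β_j be distinct positive integers with β_i, β_j < α_i and β_i, β_j < α_j. Set r_i = π^{emα_i}, r_j = π^{emα_j}, c_i = 2π^{emβ_i}, c_j = 2π^{emβ_j}. Then ((c_i − c_j − r_i − r_j)/(2 − c_i − c_j + r_i − r_j))^2 is an m-th power in O_K. -/

import Mathlib

open IsUltrametricDist Finset

section roots
variable {K : Type*} [NormedField K] [IsUltrametricDist K]

lemma crterm_norm_sub_le_max (x y : K) : ‖x - y‖ ≤ max ‖x‖ ‖y‖ := by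
  rw [sub_eq_add_neg]
  simpa using norm_add_le_max x (-y)

lemma crterm_norm_le_one {u : K} (h : ‖u - 1‖ ≤ 1) : ‖u‖ ≤ 1 := by
  have h2 : ‖(u - 1) + 1‖ ≤ max ‖u - 1‖ ‖(1:K)‖ := norm_add_le_max _ _
  simpa [h] using h2.trans (by simp [h])

lemma crterm_norm_eq_one {u : K} (h : ‖u - 1‖ < 1) : ‖u‖ = 1 := by
  refine le_antisymm (crterm_norm_le_one h.le) ?_
  have h2 : ‖u - (u - 1)‖ ≤ max ‖u‖ ‖u - 1‖ := crterm_norm_sub_le_max _ _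
  simp only [sub_sub_cancel, norm_one] at h2
  rcases max_cases ‖u‖ ‖u - 1‖ with ⟨hc, _⟩ | ⟨hc, _⟩
  · rwa [hc] at h2
  · rw [hc] at h2; linarith

lemma crterm_mul_sub_one {u v : K} {c : ℝ} (hu : ‖u - 1‖ ≤ c) (hv : ‖v - 1‖ ≤ c)
    (hc : c ≤ 1) : ‖u * v - 1‖ ≤ c := by
  have huv : u * v - 1 = u * (v - 1) + (u - 1) := by ring
  rw [huv]
  refine (norm_add_le_max _ _).trans (max_le ?_ hu)
  rw [norm_mul]
  calc ‖u‖ * ‖v - 1‖ ≤ 1 * c :=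
        mul_le_mul (crterm_norm_le_one (hu.trans hc)) hv (norm_nonneg _) zero_le_one
    _ = c := one_mul c

lemma crterm_pow_sub_one {u : K} {c : ℝ} (hu : ‖u - 1‖ ≤ c) (hc : c ≤ 1) (n : ℕ) :
    ‖u ^ n - 1‖ ≤ c := by
  induction n with
  | zero => simpa using (norm_nonneg (u - 1)).trans hu
  | succ k ih =>
    rw [pow_succ]
    exact crterm_mul_sub_one ih hu hc

/-- Key estimate: difference of `F z = (1+z)^m - 1 - m z`. -/
lemma crterm_F_lip (m : ℕ) (z z' : K) (hz : ‖z‖ ≤ 1) (hz' : ‖z'‖ ≤ 1) :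
    ‖((1+z)^m - 1 - m*z) - ((1+z')^m - 1 - m*z')‖ ≤ max ‖z‖ ‖z'‖ * ‖z - z'‖ := by
  have hδ0 : 0 ≤ max ‖z‖ ‖z'‖ := le_max_of_le_left (norm_nonneg z)
  have hδ1 : max ‖z‖ ‖z'‖ ≤ 1 := max_le hz hz'
  have hgeom := geom_sum₂_mul (1+z) (1+z') m
  have hxy : (1+z) - (1+z') = z - z' := by ring
  rw [hxy] at hgeom
  have key : ((1+z)^m - 1 - m*z) - ((1+z')^m - 1 - m*z')
      = (∑ i ∈ range m, ((1+z)^i * (1+z')^(m-1-i) - 1)) * (z - z') := by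
    rw [Finset.sum_sub_distrib, sum_const, card_range, sub_mul, hgeom]
    ring
  rw [key, norm_mul]
  refine mul_le_mul_of_nonneg_right ?_ (norm_nonneg _)
  refine norm_sum_le_of_forall_le_of_nonneg hδ0 ?_
  intro i _
  refine crterm_mul_sub_one (crterm_pow_sub_one ?_ hδ1 i) (crterm_pow_sub_one ?_ hδ1 _) hδ1
  · rw [add_sub_cancel_left]; exact le_max_left _ _
  · rw [add_sub_cancel_left]; exact le_max_right _ _

lemma crterm_exists_root [CompleteSpace K] (m : ℕ) (hm : 1 ≤ m) (a : K)
    (hm0 : (0:ℝ) < ‖(m:K)‖) (h1 : ‖a - 1‖ < ‖(m:K)‖^2) (h2 : ‖a - 1‖ ≤ ‖(m:K)‖) :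
    ∃ y : K, ‖y - 1‖ ≤ 1 ∧ y ^ m = a := by
  have hmK : (m:K) ≠ 0 := norm_pos_iff.mp hm0
  set r := ‖a - 1‖ / ‖(m:K)‖ with hr
  have hr0 : 0 ≤ r := div_nonneg (norm_nonneg _) hm0.le
  have hr1 : r ≤ 1 := (div_le_one hm0).mpr h2
  set g : K → K := fun z => ((a - 1) - ((1+z)^m - 1 - m*z)) / m with hg
  have hF : ∀ z : K, ‖z‖ ≤ r → ‖(1+z)^m - 1 - (m:K)*z‖ ≤ ‖z‖ * ‖z‖ := by
    intro z hzr
    have := crterm_F_lip m z 0 (hzr.trans hr1) (by simp)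
    simpa using this
  have hr2 : r * r ≤ ‖a - 1‖ := by
    rw [hr, div_mul_div_comm, div_le_iff₀ (by positivity)]
    have hle : ‖a - 1‖ ≤ ‖(m:K)‖ * ‖(m:K)‖ := by rw [← sq]; exact h1.le
    exact mul_le_mul_of_nonneg_left hle (norm_nonneg _)
  have hmaps : ∀ z : K, ‖z‖ ≤ r → ‖g z‖ ≤ r := by
    intro z hz
    have h3 : ‖(a - 1) - ((1+z)^m - 1 - m*z)‖ ≤ ‖a - 1‖ := by
      refine (crterm_norm_sub_le_max _ _).trans (max_le le_rfl ?_)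
      exact (hF z hz).trans <| (mul_le_mul hz hz (norm_nonneg _) hr0).trans hr2
    rw [hg]
    simp only [norm_div]
    rw [div_le_iff₀ hm0, hr, div_mul_cancel₀ _ hm0.ne']
    exact h3
  have hlip : ∀ z z' : K, ‖z‖ ≤ r → ‖z'‖ ≤ r →
      ‖g z - g z'‖ ≤ (‖a - 1‖ / ‖(m:K)‖^2) * ‖z - z'‖ := by
    intro z z' hz hz'
    have hgdiff : g z - g z' =
        -((((1+z)^m - 1 - m*z) - ((1+z')^m - 1 - m*z'))) / m := by
      simp only [hg]; ring
    rw [hgdiff, norm_div, norm_neg]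
    have hFlip := crterm_F_lip m z z' (hz.trans hr1) (hz'.trans hr1)
    have hδr : max ‖z‖ ‖z'‖ ≤ r := max_le hz hz'
    rw [div_le_iff₀ hm0]
    calc ‖((1+z)^m - 1 - m*z) - ((1+z')^m - 1 - m*z')‖
        ≤ max ‖z‖ ‖z'‖ * ‖z - z'‖ := hFlip
      _ ≤ r * ‖z - z'‖ := mul_le_mul_of_nonneg_right hδr (norm_nonneg _)
      _ = ‖a - 1‖ / ‖(m:K)‖^2 * ‖z - z'‖ * ‖(m:K)‖ := by
          rw [hr]; field_simp
  -- set up the contraction on the closed ball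
  let E := Metric.closedBall (0:K) r
  have hEc : IsClosed E := Metric.isClosed_closedBall
  haveI : CompleteSpace E := hEc.completeSpace_coe
  haveI : Nonempty E := ⟨⟨0, by simp [E, hr0]⟩⟩
  have hmem : ∀ z : E, ‖(z:K)‖ ≤ r := fun z => mem_closedBall_zero_iff.mp z.2
  let G : E → E := fun z => ⟨g z, mem_closedBall_zero_iff.mpr (hmaps z (hmem z))⟩
  have hL1 : ‖a - 1‖ / ‖(m:K)‖^2 < 1 := (div_lt_one (by positivity)).mpr h1
  have hcontr : ContractingWith (Real.toNNReal (‖a - 1‖ / ‖(m:K)‖^2)) G := by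
    constructor
    · exact_mod_cast Real.toNNReal_lt_one.mpr hL1
    · refine LipschitzWith.of_dist_le_mul ?_
      intro x y
      rw [Subtype.dist_eq, Subtype.dist_eq, dist_eq_norm, dist_eq_norm]
      rw [Real.coe_toNNReal _ (by positivity)]
      exact hlip x y (hmem x) (hmem y)
  set z := ContractingWith.fixedPoint G hcontr with hz
  have hfix : G z = z := hcontr.fixedPoint_isFixedPt
  have hfix' : g (z:K) = (z:K) := congrArg Subtype.val hfix
  refine ⟨1 + (z:K), by simpa using (hmem z).trans hr1, ?_⟩
  have := hfix'
  rw [hg] at this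
  field_simp at this
  linear_combination -this


end roots

section aux2
variable {K : Type*} [NormedField K] [IsUltrametricDist K]

lemma crterm_add_le {x y : K} {C : ℝ} (hx : ‖x‖ ≤ C) (hy : ‖y‖ ≤ C) : ‖x + y‖ ≤ C :=
  (norm_add_le_max x y).trans (max_le hx hy)

lemma crterm_nat3 (v : ℕ) : 2*v + 1 ≤ 3^v := by
  induction v with
  | zero => simp
  | succ k ih =>
    have : 3^(k+1) = 3*3^k := by ring
    rw [this]
    omega

lemma crterm_aux [CompleteSpace K] (π : K) (hπ0 : 0 < ‖π‖) (hπ1 : ‖π‖ ≤ 1)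
    (e m : ℕ) (hm : 1 ≤ m) (h2K : ‖(2:K)‖ = 1)
    (hμ0 : 0 < ‖(m:K)‖) (hμ1 : ‖π‖^(e*m) ≤ ‖(m:K)‖) (hμ2 : ‖π‖^(e*m) < ‖(m:K)‖^2)
    (β : ℕ) (N D : K)
    (hN : ‖N - 2*π^(e*m*β)‖ ≤ ‖π‖^(e*m) * ‖π‖^(e*m*β))
    (hD : ‖D - 2‖ ≤ ‖π‖^(e*m)) :
    ∃ x : K, ‖x‖ ≤ 1 ∧ x^m = (N/D)^2 := by
  have hμle : ‖(m:K)‖ ≤ 1 := norm_natCast_le_one K m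
  have hθ1 : ‖π‖^(e*m) < 1 := by
    refine lt_of_lt_of_le hμ2 ?_
    calc ‖(m:K)‖^2 ≤ 1^2 := by gcongr
      _ = 1 := one_pow 2
  have hπne : π ≠ 0 := norm_pos_iff.mp hπ0
  have h2ne : (2:K) ≠ 0 := by
    intro h; rw [h, norm_zero] at h2K; linarith
  have hcne : (2*π^(e*m*β) : K) ≠ 0 := mul_ne_zero h2ne (pow_ne_zero _ hπne)
  have hc : ‖(2*π^(e*m*β) : K)‖ = ‖π‖^(e*m*β) := by
    rw [norm_mul, h2K, one_mul, norm_pow]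
  set u : K := N / (2*π^(e*m*β)) with hu_def
  set v : K := D / 2 with hv_def
  have hu : ‖u - 1‖ ≤ ‖π‖^(e*m) := by
    have : u - 1 = (N - 2*π^(e*m*β)) / (2*π^(e*m*β)) := by
      rw [hu_def]; field_simp
    rw [this, norm_div, hc, div_le_iff₀ (by positivity)]
    exact hN
  have hv : ‖v - 1‖ ≤ ‖π‖^(e*m) := by
    have : v - 1 = (D - 2) / 2 := by rw [hv_def]; field_simp
    rw [this, norm_div, h2K, div_one]
    exact hD
  have hv1 : ‖v‖ = 1 := crterm_norm_eq_one (lt_of_le_of_lt hv hθ1)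
  have hvne : v ≠ 0 := by
    intro h; rw [h, norm_zero] at hv1; linarith
  have hDne : D ≠ 0 := by
    intro h
    apply hvne
    rw [hv_def, h, zero_div]
  have ha : ‖(u/v)^2 - 1‖ ≤ ‖π‖^(e*m) := by
    have hid : (u/v)^2 - 1 = (u - v) * (u + v) / v^2 := by field_simp; ring
    rw [hid, norm_div, norm_mul, norm_pow, hv1, one_pow, div_one]
    have h1' : ‖u - v‖ ≤ ‖π‖^(e*m) := by
      have : u - v = (u - 1) - (v - 1) := by ring
      rw [this]
      exact (crterm_norm_sub_le_max _ _).trans (max_le hu hv)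
    have h2' : ‖u + v‖ ≤ 1 := by
      refine (norm_add_le_max _ _).trans (max_le ?_ ?_)
      · exact crterm_norm_le_one (hu.trans hθ1.le)
      · exact hv1.le
    calc ‖u - v‖ * ‖u + v‖ ≤ ‖π‖^(e*m) * 1 := by
          exact mul_le_mul h1' h2' (norm_nonneg _) (by positivity)
      _ = ‖π‖^(e*m) := mul_one _
  obtain ⟨y, hy1, hym⟩ := crterm_exists_root m hm ((u/v)^2) hμ0
    (lt_of_le_of_lt ha hμ2) (ha.trans hμ1)
  refine ⟨(π^(e*β))^2 * y, ?_, ?_⟩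
  · rw [norm_mul, norm_pow, norm_pow]
    have h1' : ‖π‖^(e*β) ≤ 1 := pow_le_one₀ (norm_nonneg _) hπ1
    have h2' : ‖y‖ ≤ 1 := crterm_norm_le_one hy1
    calc (‖π‖^(e*β))^2 * ‖y‖ ≤ 1^2 * 1 := by
          exact mul_le_mul (by gcongr) h2' (norm_nonneg _) (by positivity)
      _ = 1 := by norm_num
  · have hND : (N/D)^2 = (π^(e*m*β))^2 * (u/v)^2 := by
      rw [hu_def, hv_def]
      field_simp
    have hexp : ((π^(e*β))^2)^m = (π^(e*m*β))^2 := by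
      rw [← pow_mul, ← pow_mul, ← pow_mul]
      congr 1
      ring
    rw [mul_pow, hexp, hym, hND]
end aux2


/-- Let `K` be a finite extension of `ℚ_p` (`p` odd), `π` a uniformiser, `e` the ramification
index, `m ≥ 1`.  For distinct positive integers `αi, αj, βi, βj` with `βi, βj < αi, αj`, setting
`ri = π^{emαi}`, `rj = π^{emαj}`, `ci = 2π^{emβi}`, `cj = 2π^{emβj}`, the element
`((ci - cj - ri - rj)/(2 - ci - cj + ri - rj))^2` is an `m`-th power in `𝒪_K`. -/
theorem cross_term_is_mth_power
    (p : ℕ) [Fact p.Prime] (hp2 : p ≠ 2)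
    (K : Type*) [NormedField K] [IsUltrametricDist K] [CompleteSpace K]
    [Algebra ℚ_[p] K] [FiniteDimensional ℚ_[p] K]
    (hext : ∀ x : ℚ_[p], ‖algebraMap ℚ_[p] K x‖ = ‖x‖)
    (π : K) (hπ0 : 0 < ‖π‖) (hπ1 : ‖π‖ < 1)
    (hπmax : ∀ x : K, ‖x‖ < 1 → ‖x‖ ≤ ‖π‖)
    (e : ℕ) (he1 : 1 ≤ e) (he : ‖π‖ ^ e = ‖algebraMap ℚ_[p] K (p : ℚ_[p])‖)
    (m : ℕ) (hm : 1 ≤ m)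
    (αi αj βi βj : ℕ) (hαi : 0 < αi) (hαj : 0 < αj) (hβi : 0 < βi) (hβj : 0 < βj)
    (hdist : αi ≠ αj ∧ αi ≠ βi ∧ αi ≠ βj ∧ αj ≠ βi ∧ αj ≠ βj ∧ βi ≠ βj)
    (hlt : βi < αi ∧ βi < αj ∧ βj < αi ∧ βj < αj)
    (ri rj ci cj : K)
    (hri : ri = π ^ (e * m * αi)) (hrj : rj = π ^ (e * m * αj))
    (hci : ci = 2 * π ^ (e * m * βi)) (hcj : cj = 2 * π ^ (e * m * βj)) :
    ∃ x : K, ‖x‖ ≤ 1 ∧ x ^ m = ((ci - cj - ri - rj) / (2 - ci - cj + ri - rj)) ^ 2 := by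
  obtain ⟨-, -, -, -, -, hβ⟩ := hdist
  obtain ⟨hlt1, hlt2, hlt3, hlt4⟩ := hlt
  have hp3 : 3 ≤ p := by
    have := (Fact.out : p.Prime).two_le
    omega
  have hπ1' : ‖π‖ ≤ 1 := hπ1.le
  have h2Qp : ‖(2:ℚ_[p])‖ = 1 := by
    have hle : ‖((2:ℤ):ℚ_[p])‖ ≤ 1 := Padic.norm_int_le_one 2
    have hndvd : ¬ ((p:ℤ) ∣ (2:ℤ)) := by
      intro hdvd
      have hp2' : p ∣ 2 := by exact_mod_cast hdvd
      have := Nat.le_of_dvd (by norm_num) hp2'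
      omega
    have hnlt : ¬ ‖((2:ℤ):ℚ_[p])‖ < 1 := fun h =>
      hndvd ((Padic.norm_intCast_lt_one_iff (k := 2)).mp h)
    have h1 : ‖((2:ℤ):ℚ_[p])‖ = 1 := le_antisymm hle (not_lt.mp hnlt)
    simpa using h1
  have h2K : ‖(2:K)‖ = 1 := by
    rw [← map_ofNat (algebraMap ℚ_[p] K) 2, hext, h2Qp]
  have hpR : (1:ℝ) < (p:ℝ) := by exact_mod_cast (Fact.out : p.Prime).one_lt
  have hpe : ‖π‖^e = ((p:ℝ))⁻¹ := by rw [he, hext, Padic.norm_p]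
  set v := padicValNat p m with hv
  have hmne : m ≠ 0 := by omega
  have hμ : ‖(m:K)‖ = (p:ℝ)^(-(v:ℤ)) := by
    rw [← map_natCast (algebraMap ℚ_[p] K) m, hext,
      Padic.norm_eq_zpow_neg_valuation (by exact_mod_cast hmne), Padic.valuation_natCast]
  have hθ : ‖π‖^(e*m) = (p:ℝ)^(-(m:ℤ)) := by
    rw [pow_mul, hpe, inv_pow, ← zpow_natCast, ← zpow_neg]
  have hpvm : p^v ≤ m := Nat.le_of_dvd (Nat.pos_of_ne_zero hmne) pow_padicValNat_dvd
  have hvm : v ≤ m := by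
    have h2v : v < 2^v := Nat.lt_two_pow_self
    have h2p : 2^v ≤ p^v := Nat.pow_le_pow_left (by omega) v
    omega
  have h2vm : 2*v < m := by
    have h3v : 2*v + 1 ≤ 3^v := crterm_nat3 v
    have h3p : 3^v ≤ p^v := Nat.pow_le_pow_left hp3 v
    omega
  have hμ0 : 0 < ‖(m:K)‖ := by rw [hμ]; positivity
  have hμ1 : ‖π‖^(e*m) ≤ ‖(m:K)‖ := by
    rw [hθ, hμ]
    refine zpow_le_zpow_right₀ hpR.le ?_
    omega
  have hμ2 : ‖π‖^(e*m) < ‖(m:K)‖^2 := by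
    rw [hθ, hμ, ← zpow_natCast ((p:ℝ)^(-(v:ℤ))) 2, ← zpow_mul]
    refine zpow_lt_zpow_right₀ hpR ?_
    push_cast
    omega
  have hmono : ∀ γ β : ℕ, β < γ → ‖π^(e*m*γ)‖ ≤ ‖π‖^(e*m) * ‖π‖^(e*m*β) := by
    intro γ β hβγ
    rw [norm_pow, ← pow_add]
    apply pow_le_pow_of_le_one (norm_nonneg _) hπ1'
    calc e*m + e*m*β = e*m*(β+1) := by ring
      _ ≤ e*m*γ := Nat.mul_le_mul_left _ (by omega)
  have hmono1 : ∀ γ : ℕ, 1 ≤ γ → ‖π^(e*m*γ)‖ ≤ ‖π‖^(e*m) := by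
    intro γ hγ
    rw [norm_pow]
    apply pow_le_pow_of_le_one (norm_nonneg _) hπ1'
    calc e*m = e*m*1 := by ring
      _ ≤ e*m*γ := Nat.mul_le_mul_left _ hγ
  have hDbound : ‖(2 - ci - cj + ri - rj) - 2‖ ≤ ‖π‖^(e*m) := by
    have hid : (2 - ci - cj + ri - rj : K) - 2 = -ci + (-cj + (ri + -rj)) := by ring
    rw [hid]
    refine crterm_add_le ?_ (crterm_add_le ?_ (crterm_add_le ?_ ?_))
    · rw [norm_neg, hci, norm_mul, h2K, one_mul]
      exact hmono1 βi hβi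
    · rw [norm_neg, hcj, norm_mul, h2K, one_mul]
      exact hmono1 βj hβj
    · rw [hri]
      exact hmono1 αi hαi
    · rw [norm_neg, hrj]
      exact hmono1 αj hαj
  rcases lt_or_gt_of_ne hβ with hij | hji
  · have hNbound : ‖(ci - cj - ri - rj) - 2*π^(e*m*βi)‖ ≤ ‖π‖^(e*m) * ‖π‖^(e*m*βi) := by
      have hid : (ci - cj - ri - rj) - 2*π^(e*m*βi) = -cj + (-ri + -rj) := by
        rw [hci]; ring
      rw [hid]
      refine crterm_add_le ?_ (crterm_add_le ?_ ?_)
      · rw [norm_neg, hcj, norm_mul, h2K, one_mul]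
        exact hmono βj βi hij
      · rw [norm_neg, hri]
        exact hmono αi βi hlt1
      · rw [norm_neg, hrj]
        exact hmono αj βi hlt2
    exact crterm_aux π hπ0 hπ1' e m hm h2K hμ0 hμ1 hμ2 βi _ _ hNbound hDbound
  · have hsq : ((ci - cj - ri - rj) / (2 - ci - cj + ri - rj))^2
        = ((cj - ci + ri + rj) / (2 - ci - cj + ri - rj))^2 := by
      rw [div_pow, div_pow]
      congr 1
      ring
    rw [hsq]
    have hNbound : ‖(cj - ci + ri + rj) - 2*π^(e*m*βj)‖ ≤ ‖π‖^(e*m) * ‖π‖^(e*m*βj) := by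
      have hid : (cj - ci + ri + rj) - 2*π^(e*m*βj) = -ci + (ri + rj) := by
        rw [hcj]; ring
      rw [hid]
      refine crterm_add_le ?_ (crterm_add_le ?_ ?_)
      · rw [norm_neg, hci, norm_mul, h2K, one_mul]
        exact hmono βi βj hji
      · rw [hri]
        exact hmono αi βj hlt3
      · rw [hrj]
        exact hmono αj βj hlt4
    exact crterm_aux π hπ0 hπ1' e m hm h2K hμ0 hμ1 hμ2 βj _ _ hNbound hDbound
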